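/- Every equivalence-equipped argumentation framework has at least one wide-complete extension, at least one wide-preferred extension, and at least one wide-grounded extension. -/

import Mathlib

namespace EEAF

variable {A : Type*}

/-- Equivalence closure of a set of arguments. -/
def cl (equiv : A → A → Prop) (S : Set A) : Set A := {u | ∃ v ∈ S, equiv u v}

/-- `S` is simple-conflict-free: no attacks among members of `S`. -/
def SimpleCF (att : A → A → Prop) (S : Set A) : Prop := ∀ u ∈ S, ∀ v ∈ S, ¬ att u v

/-- `S` is wide-conflict-free: its equivalence closure is simple-conflict-free. -/
def WideCF (att equiv : A → A → Prop) (S : Set A) : Prop := SimpleCF att (cl equiv S)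

/-- `S` simple-defends `u`. -/
def SimpleDef (att : A → A → Prop) (S : Set A) (u : A) : Prop :=
  ∀ v, att v u → ∃ w ∈ S, att w v

/-- `S` wide-defends `u`: it simple-defends every member of `cl {u}`. -/
def WideDef (att equiv : A → A → Prop) (S : Set A) (u : A) : Prop :=
  ∀ x ∈ cl equiv ({u} : Set A), SimpleDef att S x

/-- `S` is simple-admissible. -/
def SimpleAdm (att : A → A → Prop) (S : Set A) : Prop :=
  SimpleCF att S ∧ ∀ u ∈ S, SimpleDef att S u

/-- `S` is wide-admissible. -/
def WideAdm (att equiv : A → A → Prop) (S : Set A) : Prop :=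
  WideCF att equiv S ∧ ∀ u ∈ S, WideDef att equiv S u

/-- `S` is closed under equivalence. -/
def ClosedEquiv (equiv : A → A → Prop) (S : Set A) : Prop := S = cl equiv S

/-- `S` is closed under wide defence. -/
def ClosedWideDef (att equiv : A → A → Prop) (S : Set A) : Prop :=
  ∀ u, WideDef att equiv S u → u ∈ S

/-- Wide-complete extension: wide-admissible and closed under both wide defence
and equivalence. -/
def WideComplete (att equiv : A → A → Prop) (S : Set A) : Prop :=
  WideAdm att equiv S ∧ ClosedWideDef att equiv S ∧ ClosedEquiv equiv S

/-- Characteristic operator: arguments wide-defended by `S`. -/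
def Fop (att equiv : A → A → Prop) (S : Set A) : Set A :=
  {u | WideDef att equiv S u}

lemma Fop_mono (att equiv : A → A → Prop) {S T : Set A} (h : S ⊆ T) :
    Fop att equiv S ⊆ Fop att equiv T := by
  intro u hu x hx v hv
  obtain ⟨w, hw, hww⟩ := hu x hx v hv
  exact ⟨w, h hw, hww⟩

lemma Fop_wideCF (att equiv : A → A → Prop) (heq : Equivalence equiv) {S : Set A}
    (hS : WideCF att equiv S) : WideCF att equiv (Fop att equiv S) := by
  intro u hu v hv hatt
  obtain ⟨u', hu', huu'⟩ := hu
  obtain ⟨v', hv', hvv'⟩ := hv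
  -- S simple-defends u and v
  have hdu : SimpleDef att S u := hu' u ⟨u', rfl, huu'⟩
  have hdv : SimpleDef att S v := hv' v ⟨v', rfl, hvv'⟩
  obtain ⟨w, hw, hwu⟩ := hdv u hatt
  obtain ⟨w', hw', hw'w⟩ := hdu w hwu
  exact hS w' ⟨w', hw', heq.refl w'⟩ w ⟨w, hw, heq.refl w⟩ hw'w

lemma Fop_clEq (att equiv : A → A → Prop) (heq : Equivalence equiv) (S : Set A) :
    cl equiv (Fop att equiv S) = Fop att equiv S := by
  ext u
  constructor
  · rintro ⟨v, hv, huv⟩ x ⟨y, hy, hxy⟩ z hz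
    rcases hy with rfl
    exact hv x ⟨v, rfl, heq.trans hxy huv⟩ z hz
  · intro hu
    exact ⟨u, hu, heq.refl u⟩

/-- Existence of wide-complete, wide-preferred and wide-grounded extensions. -/
theorem exists_wide_complete_preferred_grounded
    (A : Type*) [Fintype A] (att equiv : A → A → Prop) (heq : Equivalence equiv) :
    (∃ S : Set A, WideComplete att equiv S) ∧
    (∃ S : Set A, WideComplete att equiv S ∧
      ∀ T, WideComplete att equiv T → S ⊆ T → T = S) ∧
    (∃ S : Set A, WideComplete att equiv S ∧
      ∀ T, WideComplete att equiv T → T ⊆ S → T = S) := by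
  -- iterate the characteristic operator from ∅
  set F : Set A → Set A := Fop att equiv with hF
  let c : ℕ → Set A := fun n => F^[n] ∅
  have hc0 : c 0 = ∅ := rfl
  have hcs : ∀ n, c (n + 1) = F (c n) := fun n => Function.iterate_succ_apply' F n ∅
  have hsub : ∀ n, c n ⊆ c (n + 1) := by
    intro n
    induction n with
    | zero => intro x hx; exact absurd hx (by simp [hc0])
    | succ n ih =>
      rw [hcs, hcs]
      exact Fop_mono att equiv ih
  have hcf : ∀ n, WideCF att equiv (c n) := by
    intro n
    induction n with
    | zero =>
      intro u hu
      obtain ⟨v, hv, _⟩ := hu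
      exact absurd hv (by simp [hc0])
    | succ n ih =>
      rw [hcs]
      exact Fop_wideCF att equiv heq ih
  have hmono : Monotone c := monotone_nat_of_le_succ hsub
  -- the chain stabilizes
  have : Finite (Set A) := inferInstance
  obtain ⟨m, n, hmn, hcmn⟩ := Finite.exists_ne_map_eq_of_infinite c
  have hfix : ∃ k, F (c k) = c k := by
    rcases lt_or_gt_of_ne hmn with h | h
    · exact ⟨m, by rw [← hcs]; exact le_antisymm (hcmn ▸ hmono h) (hsub m)⟩
    · exact ⟨n, by rw [← hcs]; exact le_antisymm (hcmn ▸ hmono h) (hsub n)⟩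
  obtain ⟨k, hk⟩ := hfix
  set G : Set A := c k with hG
  have hGfix : Fop att equiv G = G := hk
  have hGcomplete : WideComplete att equiv G := by
    refine ⟨⟨hcf k, ?_⟩, ?_, ?_⟩
    · intro u hu
      rw [← hGfix] at hu
      exact hu
    · intro u hu
      rw [← hGfix]
      exact hu
    · have h := Fop_clEq att equiv heq G
      rw [hGfix] at h
      exact h.symm
  -- maximal and minimal wide-complete extensions by finiteness
  set s : Set (Set A) := {S | WideComplete att equiv S} with hs
  have hsfin : s.Finite := Set.toFinite s
  have hsne : s.Nonempty := ⟨G, hGcomplete⟩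
  obtain ⟨P, hP, hPmax⟩ : ∃ a ∈ s, ∀ a' ∈ s, id a ≤ id a' → id a = id a' := by
    obtain ⟨P, hP, hPm⟩ := hsfin.exists_maximal hsne
    exact ⟨P, hP, fun T hT h => le_antisymm h (hPm hT h)⟩
  obtain ⟨Q, hQ, hQmin⟩ : ∃ a ∈ s, ∀ a' ∈ s, id a' ≤ id a → id a = id a' := by
    obtain ⟨Q, hQ, hQm⟩ := hsfin.exists_minimal hsne
    exact ⟨Q, hQ, fun T hT h => le_antisymm (hQm hT h) h⟩
  refine ⟨⟨G, hGcomplete⟩, ⟨P, hP, ?_⟩, ⟨Q, hQ, ?_⟩⟩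
  · intro T hT hPT
    exact (hPmax T hT hPT).symm
  · intro T hT hTQ
    exact (hQmin T hT hTQ).symm

end EEAF
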